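/- Fix 1 ≤ m ≤ n. For each j ∈ [n−m+1] let α_j = ∏_{i=1}^m x_{m−i+1, j+i−1} (the j-th antidiagonal monomial). For every generator μ = ∏_{i=1}^m x_{m−i+1,k_i} of the antidiagonal initial ideal of maximal minors (1 ≤ k₁ < … < k_m ≤ n) and every (m−1)-element subset A = {a₁<…<a_{m−1}} ⊆ {2,…,n}, there exists j ∈ [n−m+1] such that α_j divides μ·β_A. -/
import Mathlib


open MvPolynomial Finset

/-- The set `V = {(i,j) ∈ [m]×[n] : m−i < j ≤ n−i+1}` (1-based indices). -/
def Vset (m n : ℕ) : Finset (ℕ × ℕ) :=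
  ((Finset.Icc 1 m) ×ˢ (Finset.Icc 1 n)).filter
    (fun p => m - p.1 < p.2 ∧ p.2 ≤ n - p.1 + 1)

/-- `a : ℕ → ℕ` represents an `(m−1)`-element subset `A = {a 1 < … < a (m−1)} ⊆ {2,…,n}`,
together with the conventions `a 0 = 1` and `a m = n + 1`. -/
def SubsetRep (m n : ℕ) (a : ℕ → ℕ) : Prop :=
  a 0 = 1 ∧ a m = n + 1 ∧ ∀ i < m, a i < a (i + 1)

/-- The region `D_A = {(i,j) ∈ V : a_{m−i} ≤ j < a_{m−i+1}}`. -/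
def Dset (m n : ℕ) (a : ℕ → ℕ) : Finset (ℕ × ℕ) :=
  (Vset m n).filter (fun p => a (m - p.1) ≤ p.2 ∧ p.2 < a (m - p.1 + 1))

variable (K : Type*) [Field K]

/-- The squarefree monomial `β_A = ∏_{(i,j) ∈ V ∖ D_A} x_{i,j}`. -/
noncomputable def betaM (m n : ℕ) (a : ℕ → ℕ) : MvPolynomial (ℕ × ℕ) K :=
  ∏ p ∈ Vset m n \ Dset m n a, X p

/-- The antidiagonal monomial `α_j = ∏_{i=1}^m x_{m−i+1, j+i−1}`. -/
noncomputable def alphaM (m : ℕ) (j : ℕ) : MvPolynomial (ℕ × ℕ) K :=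
  ∏ i ∈ Finset.Icc 1 m, X (m - i + 1, j + i - 1)

/-- The ideal `N` generated by the monomials `β_A` for all `(m−1)`-element subsets
`A ⊆ {2,…,n}`. -/
noncomputable def Nideal (m n : ℕ) : Ideal (MvPolynomial (ℕ × ℕ) K) :=
  Ideal.span { f | ∃ a : ℕ → ℕ, SubsetRep m n a ∧ f = betaM K m n a }

/-- `A k`, `1 ≤ k ≤ s`, is a chain `A₁ ≤ … ≤ A_s` of `(m−1)`-element subsets of `{2,…,n}`,
where `≤` is the componentwise partial order. -/
def BetaChain (m n s : ℕ) (A : ℕ → ℕ → ℕ) : Prop :=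
  (∀ k, 1 ≤ k → k ≤ s → SubsetRep m n (A k)) ∧
    (∀ k, 1 ≤ k → k + 1 ≤ s → ∀ i ≤ m, A k i ≤ A (k + 1) i)

/-- `W^{[2]}` : the ideal generated by the squares of all the monomials in `W`. -/
noncomputable def bracketTwo {σ : Type*} (W : Ideal (MvPolynomial σ K)) :
    Ideal (MvPolynomial σ K) :=
  Ideal.span { g | ∃ d : σ →₀ ℕ, (monomial d (1 : K)) ∈ W ∧ g = (monomial d (1 : K)) ^ 2 }

/-- The symbolic power `I^{(n)} = ⋂_{p ∈ Min(I)} (pⁿ R_p ∩ R)`. -/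
noncomputable def symbolicPower {R : Type*} [CommRing R] (I : Ideal R) (n : ℕ) : Ideal R :=
  ⨅ p : {q : Ideal R // q ∈ I.minimalPrimes},
    letI : p.1.IsPrime := p.2.1.1
    ((p.1 ^ n).map (algebraMap R (Localization.AtPrime p.1))).comap
      (algebraMap R (Localization.AtPrime p.1))

lemma gap_lemma (f : ℕ → ℕ) (lo hi : ℕ) (h : ∀ i, lo ≤ i → i < hi → f i < f (i + 1)) :
    ∀ i' i, lo ≤ i → i ≤ i' → i' ≤ hi → f i + (i' - i) ≤ f i' := by
  intro i'
  induction i' with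
  | zero =>
    intro i h1 h2 h3
    have : i = 0 := by omega
    subst this; simp
  | succ nn ih =>
    intro i h1 h2 h3
    rcases eq_or_lt_of_le h2 with rfl | hlt
    · simp
    · have h4 : i ≤ nn := by omega
      have e1 := ih i h1 h4 (by omega)
      have e2 := h nn (by omega) (by omega)
      omega

/-- For every generator `μ = ∏_{i=1}^m x_{m−i+1,k_i}` of the
antidiagonal initial ideal of maximal minors and every `(m−1)`-element subset
`A ⊆ {2,…,n}`, some antidiagonal monomial `α_j`, `1 ≤ j ≤ n−m+1`, divides `μ·β_A`. -/
theorem stmt_13 (m n : ℕ) (hm : 1 ≤ m) (hmn : m ≤ n)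
    (k : ℕ → ℕ) (hk1 : 1 ≤ k 1) (hkn : k m ≤ n)
    (hkmono : ∀ i, 1 ≤ i → i < m → k i < k (i + 1))
    (a : ℕ → ℕ) (ha : SubsetRep m n a) :
    ∃ j, 1 ≤ j ∧ j ≤ n - m + 1 ∧
      alphaM K m j ∣
        (∏ i ∈ Finset.Icc 1 m, (X (m - i + 1, k i) : MvPolynomial (ℕ × ℕ) K)) *
          betaM K m n a := by
  obtain ⟨ha0, ham, hamono⟩ := ha
  have hkgap : ∀ i i', 1 ≤ i → i ≤ i' → i' ≤ m → k i + (i' - i) ≤ k i' :=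
    fun i i' h1 h2 h3 => gap_lemma k 1 m hkmono i' i h1 h2 h3
  have hagap : ∀ i i', i ≤ i' → i' ≤ m → a i + (i' - i) ≤ a i' :=
    fun i i' h2 h3 => gap_lemma a 0 m (fun i _ h => hamono i h) i' i (Nat.zero_le i) h2 h3
  have hP : ∃ i, i = m ∨ (1 ≤ i ∧ k i + 1 < a i) := ⟨m, Or.inl rfl⟩
  set ε := Nat.find hP with hεdef
  have hPε := Nat.find_spec hP
  rw [← hεdef] at hPε
  have hεmin : ∀ i, i < ε → ¬(i = m ∨ (1 ≤ i ∧ k i + 1 < a i)) :=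
    fun i h => Nat.find_min hP h
  have hεm : ε ≤ m := Nat.find_le (Or.inl rfl)
  have hε1 : 1 ≤ ε := by
    rcases Nat.eq_zero_or_pos ε with h0 | h
    · rcases hPε with h | ⟨h1, _⟩ <;> omega
    · exact h
  have hkε : ε ≤ k ε := by
    have := hkgap 1 ε le_rfl hε1 hεm
    omega
  have hkεn : k ε + (m - ε) ≤ n := by
    have := hkgap ε m hε1 hεm le_rfl
    omega
  set j := k ε - ε + 1 with hjdef
  refine ⟨j, by omega, by omega, ?_⟩
  set T := (Finset.Icc 1 m).filter (fun i => j + i - 1 = k i) with hT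
  set Tc := (Finset.Icc 1 m).filter (fun i => ¬(j + i - 1 = k i)) with hTc
  have hsplit : alphaM K m j =
      (∏ i ∈ T, (X (m - i + 1, j + i - 1) : MvPolynomial (ℕ × ℕ) K)) *
        (∏ i ∈ Tc, (X (m - i + 1, j + i - 1) : MvPolynomial (ℕ × ℕ) K)) := by
    rw [alphaM, hT, hTc, Finset.prod_filter_mul_prod_filter_not]
  have h1 : (∏ i ∈ T, (X (m - i + 1, j + i - 1) : MvPolynomial (ℕ × ℕ) K)) ∣
      ∏ i ∈ Finset.Icc 1 m, (X (m - i + 1, k i) : MvPolynomial (ℕ × ℕ) K) := by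
    have heq : (∏ i ∈ T, (X (m - i + 1, j + i - 1) : MvPolynomial (ℕ × ℕ) K)) =
        ∏ i ∈ T, (X (m - i + 1, k i) : MvPolynomial (ℕ × ℕ) K) := by
      refine Finset.prod_congr rfl (fun i hi => ?_)
      rw [hT, Finset.mem_filter] at hi
      rw [hi.2]
    rw [heq]
    exact Finset.prod_dvd_prod_of_subset _ _ _ (Finset.filter_subset _ _)
  have h2 : (∏ i ∈ Tc, (X (m - i + 1, j + i - 1) : MvPolynomial (ℕ × ℕ) K)) ∣
      betaM K m n a := by
    rw [betaM]
    have hinj : ∀ x ∈ Tc, ∀ y ∈ Tc,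
        (fun i => ((m - i + 1, j + i - 1) : ℕ × ℕ)) x =
          (fun i => ((m - i + 1, j + i - 1) : ℕ × ℕ)) y → x = y := by
      intro x hx y hy hxy
      rw [hTc, Finset.mem_filter, Finset.mem_Icc] at hx hy
      simp only [Prod.mk.injEq] at hxy
      omega
    have := (Finset.prod_image (g := fun i => ((m - i + 1, j + i - 1) : ℕ × ℕ))
      (f := fun p => (X p : MvPolynomial (ℕ × ℕ) K)) hinj).symm
    rw [this]
    apply Finset.prod_dvd_prod_of_subset
    intro p hp
    rw [Finset.mem_image] at hp
    obtain ⟨i, hi, rfl⟩ := hp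
    rw [hTc, Finset.mem_filter, Finset.mem_Icc] at hi
    obtain ⟨⟨hi1, hi2⟩, hne⟩ := hi
    have hVmem : ((m - i + 1, j + i - 1) : ℕ × ℕ) ∈ Vset m n := by
      rw [Vset, Finset.mem_filter, Finset.mem_product, Finset.mem_Icc, Finset.mem_Icc]
      refine ⟨⟨⟨by omega, by omega⟩, by omega, by omega⟩, by omega, by omega⟩
    rw [Finset.mem_sdiff]
    refine ⟨hVmem, ?_⟩
    rw [Dset, Finset.mem_filter]
    rintro ⟨-, hD1, hD2⟩
    simp only at hD1 hD2
    have e1 : m - (m - i + 1) = i - 1 := by omega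
    have e2 : m - (m - i + 1) + 1 = i := by omega
    rw [e1] at hD1
    rw [e2] at hD2
    -- hD1 : a (i - 1) ≤ j + i - 1, hD2 : j + i - 1 < a i
    rcases lt_trichotomy i ε with hlt | rfl | hgt
    · have := hεmin i hlt
      push_neg at this
      have hai : a i ≤ k i + 1 := this.2 hi1
      have hki := hkgap i ε hi1 (le_of_lt hlt) hεm
      omega
    · omega
    · have hεne : ε ≠ m := by omega
      have hkεa : k ε + 1 < a ε := by
        rcases hPε with h | ⟨_, h⟩
        · omega
        · exact h
      have := hagap ε (i - 1) (by omega) (by omega)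
      omega
  rw [hsplit]
  exact mul_dvd_mul h1 h2
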